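/- The mapping T : ℝ → ℝ defined by Tx = |x| + 1 is firm non-expansive with respect to the usual metric on ℝ: it is non-expansive, and there exist functions q, r, s, t : ℝ×ℝ → [0,∞) with inf t > 0, sup(q + r + s + 2t) ≤ 1, and |Tx − Ty| ≤ q(x,y)|x−y| + r(x,y)|x−Tx| + s(x,y)|y−Ty| + t(x,y)(|x−Ty| + |Tx−y|) for all x,y. -/
import Mathlib


open Filter Topology

def IsWeakMetric {X : Type*} (δ : X → X → ℝ) : Prop :=
  (∀ x, δ x x = 0) ∧ (∀ x y, 0 ≤ δ x y) ∧ (∀ x y z, δ x z ≤ δ x y + δ y z)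

def IsNonexpansive {X : Type*} (δ : X → X → ℝ) (T : X → X) : Prop :=
  ∀ x y, δ (T x) (T y) ≤ δ x y

def IsFirm {X : Type*} (δ : X → X → ℝ) (T : X → X) : Prop :=
  ∃ q r s t : X → X → ℝ,
    (∀ x y, 0 ≤ q x y) ∧ (∀ x y, 0 ≤ r x y) ∧ (∀ x y, 0 ≤ s x y) ∧ (∀ x y, 0 ≤ t x y) ∧
    (∃ α > 0, ∀ x y, α ≤ t x y) ∧
    (∀ x y, q x y + r x y + s x y + 2 * t x y ≤ 1) ∧
    (∀ x y, δ (T x) (T y) ≤ q x y * δ x y + r x y * δ x (T x) + s x y * δ y (T y)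
      + t x y * (δ x (T y) + δ (T x) y))

theorem stmt7 (T : ℝ → ℝ) (hT : ∀ x : ℝ, T x = |x| + 1) :
    IsNonexpansive (fun x y : ℝ => |x - y|) T ∧ IsFirm (fun x y : ℝ => |x - y|) T := by
  constructor
  · intro x y
    simp only [hT]
    calc |(|x| + 1) - (|y| + 1)| = |(|x| - |y|)| := by ring_nf
      _ ≤ |x - y| := abs_abs_sub_abs_le_abs_sub x y
  · refine ⟨fun _ _ => 0, fun _ _ => 0, fun _ _ => 0, fun _ _ => 1/2,
      fun _ _ => le_rfl, fun _ _ => le_rfl, fun _ _ => le_rfl, fun _ _ => by norm_num,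
      ⟨1/2, by norm_num, fun _ _ => le_rfl⟩, fun _ _ => by norm_num, ?_⟩
    intro x y
    simp only [hT, zero_mul, zero_add]
    set a := |x| - |y| with ha
    have h1 : |a - 1| ≤ |x - (|y| + 1)| := by
      have := abs_abs_sub_abs_le_abs_sub x (|y| + 1)
      rwa [abs_of_nonneg (by positivity : (0:ℝ) ≤ |y| + 1), show |x| - (|y| + 1) = a - 1 by ring] at this
    have h2 : |a + 1| ≤ |(|x| + 1) - y| := by
      have := abs_abs_sub_abs_le_abs_sub (|x| + 1) y
      rwa [abs_of_nonneg (by positivity : (0:ℝ) ≤ |x| + 1), show (|x| + 1) - |y| = a + 1 by ring] at this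
    have key : 2 * |a| ≤ |a - 1| + |a + 1| := by
      have := abs_add_le (a - 1) (a + 1)
      calc 2 * |a| = |(a - 1) + (a + 1)| := by rw [show (a-1)+(a+1) = 2*a by ring, abs_mul]; norm_num
        _ ≤ |a - 1| + |a + 1| := this
    have hL : |(|x| + 1) - (|y| + 1)| = |a| := by rw [ha]; ring_nf
    rw [hL]
    linarith
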